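/- Let N ≥ 1, let α ∈ {2,3}, and let a ∈ ℤ, b : {1,…,N} → ℤ satisfy a² − Σᵢ bᵢ² = −α and −3a + Σᵢ bᵢ = α − 2. If a > 3, then the number of indices i with bᵢ ≠ 0 is at least α + 7. (Lemma 3.5 of the paper.) -/
import Mathlib


/-- Lemma 3.5: if the class `A = aH − Σᵢ bᵢEᵢ` satisfies `A·A = −α` and
`K·A = α − 2` (`α = 2, 3`) and `a > 3`, then at least `α + 7` of the
coefficients `bᵢ` are nonzero. -/
theorem stmt2 (N : ℕ) (hN : 1 ≤ N) (α a : ℤ) (hα : α = 2 ∨ α = 3)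
    (b : Fin N → ℤ)
    (h1 : a ^ 2 - (∑ i, (b i) ^ 2) = -α)
    (h2 : -3 * a + (∑ i, b i) = α - 2)
    (ha : 3 < a) :
    α + 7 ≤ ((Finset.univ.filter (fun i => b i ≠ 0)).card : ℤ) := by
  set S := Finset.univ.filter (fun i => b i ≠ 0) with hS
  have hsum : ∑ i ∈ S, b i = ∑ i, b i := by
    apply Finset.sum_filter_of_ne
    intro i _ h h0
    exact h (by simp [h0])
  have hsq : ∑ i ∈ S, (b i) ^ 2 = ∑ i, (b i) ^ 2 := by
    apply Finset.sum_filter_of_ne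
    intro i _ h h0
    exact h (by simpa using h0)
  -- Inequality A: 3 * ∑ b ≤ 2 * |S| + ∑ b²
  have hA : 3 * (∑ i, b i) ≤ 2 * (S.card : ℤ) + ∑ i, (b i) ^ 2 := by
    rw [← hsum, ← hsq]
    have hcard : (S.card : ℤ) = ∑ _i ∈ S, (1 : ℤ) := by simp
    rw [hcard, Finset.mul_sum, Finset.mul_sum, ← Finset.sum_add_distrib]
    apply Finset.sum_le_sum
    intro i _
    have : b i ≤ 1 ∨ 2 ≤ b i := by omega
    rcases this with h | h
    · nlinarith [sq_nonneg (b i - 1)]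
    · nlinarith [sq_nonneg (b i - 2)]
  -- Inequality B: Cauchy–Schwarz
  have hB : (∑ i, b i) ^ 2 ≤ (S.card : ℤ) * ∑ i, (b i) ^ 2 := by
    rw [← hsum, ← hsq]
    have := sq_sum_le_card_mul_sum_sq (s := S) (f := b)
    simpa using this
  have ha2 : a = 4 ∨ a = 5 ∨ 5 ≤ a := by omega
  rcases ha2 with h4 | h5 | h6
  · rcases hα with h | h <;> subst h <;> subst h4 <;> omega
  · rcases hα with h | h <;> subst h <;> subst h5 <;> omega
  · by_contra hk
    push_neg at hk
    have hk' : (S.card : ℤ) ≤ α + 6 := by omega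
    have hsq' : ∑ i, (b i) ^ 2 = a ^ 2 + α := by omega
    have hsum' : ∑ i, b i = 3 * a + α - 2 := by omega
    rw [hsum', hsq'] at hB
    have hnn : (0 : ℤ) ≤ a ^ 2 + α := by nlinarith
    have : (3 * a + α - 2) ^ 2 ≤ (α + 6) * (a ^ 2 + α) :=
      le_trans hB (by apply mul_le_mul_of_nonneg_right hk' hnn)
    rcases hα with h | h <;> subst h <;> nlinarith
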